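/- The number of row/column-permutation equivalence classes of unsigned sets of generators {|L_1|, |L_2|} arising from connected sets of generators {L_1, L_2} of GR(2,2) is exactly 1. -/

import Mathlib

open Matrix

/-- A signed permutation matrix: exactly one nonzero entry (which is `1` or `-1`)
in each row and in each column. -/
def IsSignedPermMatrix {d : ℕ} (M : Matrix (Fin d) (Fin d) ℤ) : Prop :=
  (∀ j k, M j k = 0 ∨ M j k = 1 ∨ M j k = -1) ∧
  (∀ j, ∃! k, M j k ≠ 0) ∧ (∀ k, ∃! j, M j k ≠ 0)

/-- A permutation matrix: exactly one nonzero entry (which is `1`)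
in each row and in each column. -/
def IsPermMatrix {d : ℕ} (M : Matrix (Fin d) (Fin d) ℤ) : Prop :=
  (∀ j k, M j k = 0 ∨ M j k = 1) ∧
  (∀ j, ∃! k, M j k ≠ 0) ∧ (∀ k, ∃! j, M j k ≠ 0)

/-- `|M|`: entrywise absolute value. -/
def absMat {d : ℕ} (M : Matrix (Fin d) (Fin d) ℤ) : Matrix (Fin d) (Fin d) ℤ :=
  M.map (fun x => |x|)

/-- A list of generators of the garden algebra `GR(d,N)`. -/
def IsGenList (d N : ℕ) (L : Fin N → Matrix (Fin d) (Fin d) ℤ) : Prop :=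
  (∀ i, IsSignedPermMatrix (L i)) ∧
  (∀ i j, L i * (L j)ᵀ + L j * (L i)ᵀ =
      if i = j then (2 : ℤ) • (1 : Matrix (Fin d) (Fin d) ℤ) else 0) ∧
  (∀ i j, (L i)ᵀ * L j + (L j)ᵀ * L i =
      if i = j then (2 : ℤ) • (1 : Matrix (Fin d) (Fin d) ℤ) else 0)

/-- A set of generators of `GR(d,N)`: the underlying set of a list of generators. -/
def IsGenSet (d N : ℕ) (S : Set (Matrix (Fin d) (Fin d) ℤ)) : Prop :=
  ∃ L : Fin N → Matrix (Fin d) (Fin d) ℤ, IsGenList d N L ∧ S = Set.range L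

/-- The bipartite graph on two copies of `Fin d` with an edge between top vertex `j`
and bottom vertex `k` whenever some matrix in `S` has a nonzero `(j,k)` entry. -/
def genGraph {d : ℕ} (S : Set (Matrix (Fin d) (Fin d) ℤ)) : SimpleGraph (Fin d ⊕ Fin d) :=
  SimpleGraph.fromRel (fun a b =>
    ∃ j k, a = Sum.inl j ∧ b = Sum.inr k ∧ ∃ M ∈ S, M j k ≠ 0)

/-- A connected set of generators of `GR(d,N)`. -/
def ConnectedGenSet (d N : ℕ) (S : Set (Matrix (Fin d) (Fin d) ℤ)) : Prop :=
  IsGenSet d N S ∧ (genGraph S).Connected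

/-- Row/column-permutation equivalence of sets of `d × d` matrices. -/
def RCEquiv {d : ℕ} (S S' : Set (Matrix (Fin d) (Fin d) ℤ)) : Prop :=
  ∃ P Q : Matrix (Fin d) (Fin d) ℤ, IsPermMatrix P ∧ IsPermMatrix Q ∧
    S' = (fun M => P * M * Q) '' S

/-- The number of row/column-permutation equivalence classes of connected sets of
generators of `GR(d,N)`. -/
noncomputable def signedCount (d N : ℕ) : ℕ :=
  Nat.card (Quot (fun S S' : {S : Set (Matrix (Fin d) (Fin d) ℤ) // ConnectedGenSet d N S} =>
    RCEquiv S.1 S'.1))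

/-- The number of row/column-permutation equivalence classes of unsigned sets of
generators arising from connected sets of generators of `GR(d,N)`. -/
noncomputable def unsignedCount (d N : ℕ) : ℕ :=
  Nat.card (Quot (fun T T' : {T : Set (Matrix (Fin d) (Fin d) ℤ) //
      ∃ S, ConnectedGenSet d N S ∧ T = absMat '' S} =>
    RCEquiv T.1 T'.1))


def Jmat : Matrix (Fin 2) (Fin 2) ℤ := !![0,1;1,0]

def L0 : Fin 2 → Matrix (Fin 2) (Fin 2) ℤ := ![1, !![0,1;-1,0]]

set_option synthInstance.maxSize 100000 in
set_option synthInstance.maxHeartbeats 1000000 in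
lemma genlist_L0 : IsGenList 2 2 L0 := by
  unfold IsGenList IsSignedPermMatrix ExistsUnique
  simp only [Fin.forall_fin_two, Fin.exists_fin_two]
  decide

lemma connected_L0 : (genGraph (Set.range L0)).Connected := by
  have hadj : ∀ j k : Fin 2, (genGraph (Set.range L0)).Adj (Sum.inl j) (Sum.inr k) := by
    intro j k
    refine (SimpleGraph.fromRel_adj _ _ _).mpr ⟨by simp, Or.inl ⟨j, k, rfl, rfl, ?_⟩⟩
    fin_cases j <;> fin_cases k
    · exact ⟨L0 0, Set.mem_range_self 0, by decide⟩
    · exact ⟨L0 1, Set.mem_range_self 1, by decide⟩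
    · exact ⟨L0 1, Set.mem_range_self 1, by decide⟩
    · exact ⟨L0 0, Set.mem_range_self 0, by decide⟩
  constructor
  intro u v
  rcases u with j | j <;> rcases v with k | k
  · exact (hadj j 0).reachable.trans (hadj k 0).symm.reachable
  · exact (hadj j k).reachable
  · exact (hadj k j).symm.reachable
  · exact ((hadj 0 j).symm.reachable).trans (hadj 0 k).reachable

lemma connectedGenSet_L0 : ConnectedGenSet 2 2 (Set.range L0) :=
  ⟨⟨L0, genlist_L0, rfl⟩, connected_L0⟩

lemma absimg_L0 : absMat '' (Set.range L0) = {1, Jmat} := by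
  have h : Set.range L0 = {L0 0, L0 1} := by
    ext x
    constructor
    · rintro ⟨i, rfl⟩; fin_cases i <;> simp
    · rintro (rfl | rfl)
      exacts [⟨0, rfl⟩, ⟨1, rfl⟩]
  rw [h, Set.image_pair]
  have h1 : absMat (L0 0) = 1 := by decide
  have h2 : absMat (L0 1) = Jmat := by decide
  rw [h1, h2]

lemma isPerm_abs {M : Matrix (Fin 2) (Fin 2) ℤ} (h : IsSignedPermMatrix M) :
    IsPermMatrix (absMat M) := by
  refine ⟨fun j k => ?_, ?_, ?_⟩
  · rcases h.1 j k with h0 | h0 | h0 <;> simp [absMat, Matrix.map_apply, h0]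
  · intro j; simpa [absMat, Matrix.map_apply, abs_ne_zero] using h.2.1 j
  · intro k; simpa [absMat, Matrix.map_apply, abs_ne_zero] using h.2.2 k

lemma isPerm_transpose {M : Matrix (Fin 2) (Fin 2) ℤ} (h : IsPermMatrix M) :
    IsPermMatrix Mᵀ := by
  refine ⟨fun j k => h.1 k j, fun j => ?_, fun k => ?_⟩
  · simpa [Matrix.transpose_apply] using h.2.2 j
  · simpa [Matrix.transpose_apply] using h.2.1 k

lemma isPerm_one : IsPermMatrix (1 : Matrix (Fin 2) (Fin 2) ℤ) := by
  unfold IsPermMatrix ExistsUnique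
  beta_reduce
  simp only [Matrix.one_apply]
  decide

lemma abs_entry_mul {A B : Matrix (Fin 2) (Fin 2) ℤ}
    (hA : ∀ j, A 0 j = 0 ∨ A 1 j = 0) (j k : Fin 2) :
    ((absMat A)ᵀ * (absMat B)) j k = |(Aᵀ * B) j k| := by
  simp only [absMat, Matrix.mul_apply, Fin.sum_univ_two, Matrix.transpose_apply,
    Matrix.map_apply]
  rcases hA j with h0 | h0 <;> simp [h0, abs_mul]

/- ====== main lemma ====== -/

lemma main_equiv (S : Set (Matrix (Fin 2) (Fin 2) ℤ)) (hS : ConnectedGenSet 2 2 S) :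
    RCEquiv (absMat '' S) ({1, Jmat}) := by
  obtain ⟨⟨L, hL, rfl⟩, _⟩ := hS
  have hspA := hL.1 0
  have hAcol : ∀ j, L 0 0 j = 0 ∨ L 0 1 j = 0 := by
    intro j
    by_contra hcon
    push_neg at hcon
    have := (hspA.2.2 j).unique hcon.1 hcon.2
    exact absurd this (by decide)
  -- A^T A = 1
  have hAA : (L 0)ᵀ * L 0 = 1 := by
    have h := hL.2.2 0 0
    rw [if_pos rfl] at h
    ext j k
    have h' := congrFun (congrFun h j) k
    simp only [Matrix.add_apply, Matrix.smul_apply, Matrix.smul_apply, smul_eq_mul] at h'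
    omega
  -- B B^T = 1
  have hBB : L 1 * (L 1)ᵀ = 1 := by
    have h := hL.2.1 1 1
    rw [if_pos rfl] at h
    ext j k
    have h' := congrFun (congrFun h j) k
    simp only [Matrix.add_apply, Matrix.smul_apply, smul_eq_mul] at h'
    omega
  have hC0 : (L 0)ᵀ * L 1 + (L 1)ᵀ * L 0 = 0 := by
    have h := hL.2.2 0 1
    rwa [if_neg (by decide)] at h
  have hCdiag : ∀ j, ((L 0)ᵀ * L 1) j j = 0 := by
    intro j
    have h' := congrFun (congrFun hC0 j) j
    simp only [Matrix.add_apply, Matrix.zero_apply] at h'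
    have hcomm : ((L 1)ᵀ * L 0) j j = ((L 0)ᵀ * L 1) j j := by
      simp [Matrix.mul_apply, Fin.sum_univ_two, Matrix.transpose_apply, mul_comm]
    rw [hcomm] at h'
    omega
  have hCC : ((L 0)ᵀ * L 1) * ((L 0)ᵀ * L 1)ᵀ = 1 := by
    rw [Matrix.transpose_mul, Matrix.transpose_transpose]
    calc (L 0)ᵀ * L 1 * ((L 1)ᵀ * L 0) = (L 0)ᵀ * (L 1 * (L 1)ᵀ) * L 0 := by noncomm_ring
    _ = 1 := by rw [hBB, Matrix.mul_one, hAA]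
  have hC01 : |((L 0)ᵀ * L 1) 0 1| = 1 := by
    have h' := congrFun (congrFun hCC 0) 0
    rw [Matrix.mul_apply, Fin.sum_univ_two] at h'
    simp only [Matrix.transpose_apply, Matrix.one_apply_eq, hCdiag 0, zero_mul, zero_add] at h'
    rcases mul_self_eq_one_iff.mp h' with h | h <;> simp [h]
  have hC10 : |((L 0)ᵀ * L 1) 1 0| = 1 := by
    have h' := congrFun (congrFun hCC 1) 1
    rw [Matrix.mul_apply, Fin.sum_univ_two] at h'
    simp only [Matrix.transpose_apply, Matrix.one_apply_eq, hCdiag 1, zero_mul, mul_zero, add_zero, zero_add] at h'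
    rcases mul_self_eq_one_iff.mp h' with h | h <;> simp [h]
  -- the witnesses
  refine ⟨(absMat (L 0))ᵀ, 1, isPerm_transpose (isPerm_abs hspA), isPerm_one, ?_⟩
  have hrange : Set.range L = {L 0, L 1} := by
    ext x
    constructor
    · rintro ⟨i, rfl⟩; fin_cases i <;> simp
    · rintro (rfl | rfl)
      exacts [⟨0, rfl⟩, ⟨1, rfl⟩]
  rw [hrange, Set.image_pair, Set.image_pair]
  have habsA : (absMat (L 0))ᵀ * absMat (L 0) * 1 = 1 := by
    rw [Matrix.mul_one]
    ext j k
    rw [abs_entry_mul hAcol, hAA]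
    by_cases hjk : j = k <;> simp [Matrix.one_apply, hjk]
  have habsB : (absMat (L 0))ᵀ * absMat (L 1) * 1 = Jmat := by
    rw [Matrix.mul_one]
    ext j k
    rw [abs_entry_mul hAcol]
    fin_cases j <;> fin_cases k <;>
      simp [Jmat, hCdiag 0, hCdiag 1, hC01, hC10]
  rw [habsA, habsB]

/-- There is exactly `1` row/column-permutation equivalence class of unsigned
sets of generators arising from connected sets of generators of `GR(2,2)`. -/
theorem unsigned_count_two_two : unsignedCount 2 2 = 1 := by
  unfold unsignedCount
  rw [Nat.card_eq_one_iff_unique]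
  set T0 : {T : Set (Matrix (Fin 2) (Fin 2) ℤ) //
      ∃ S, ConnectedGenSet 2 2 S ∧ T = absMat '' S} :=
    ⟨{1, Jmat}, Set.range L0, connectedGenSet_L0, absimg_L0.symm⟩ with hT0
  constructor
  · constructor
    intro x y
    induction x using Quot.ind with | _ a =>
    induction y using Quot.ind with | _ b =>
    have ha : RCEquiv a.1 T0.1 := by
      obtain ⟨Sa, hSa, hTa⟩ := a.2
      rw [hTa]
      exact main_equiv Sa hSa
    have hb : RCEquiv b.1 T0.1 := by
      obtain ⟨Sb, hSb, hTb⟩ := b.2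
      rw [hTb]
      exact main_equiv Sb hSb
    refine Eq.trans (b := Quot.mk _ T0) ?_ ?_
    · exact Quot.sound ha
    · symm
      exact Quot.sound hb
  · exact ⟨Quot.mk _ T0⟩
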